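/- Let P be a finite poset and (x₁, x₂, …, xₙ) any linear extension of P. Then noncommutative order rowmotion NOR = T_{x₁} ∘ T_{x₂} ∘ ⋯ ∘ T_{xₙ} equals the composition Θ ∘ Δ⁻¹ ∘ ∇ of the noncommutative transfer maps: NOR(f) = Θ(Δ⁻¹(∇(f))) for every S-labeling f of P for which both sides are defined (i.e., every element inverted in the computation is nonzero). -/

import Mathlib

/-!
Noncommutative (skew field) antichain/order toggling and rowmotion on a finite poset `P`,
with labels in a division ring `S` and a fixed central element `C`, following
Joseph–Roby, "Birational and noncommutative lifts of antichain toggling and rowmotion".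
All maps are partial; definedness ("every element inverted in the computation is
nonzero") is recorded by explicit predicates.
-/

open Finset

attribute [local instance] Classical.propDecidable

variable {P : Type*} [Fintype P] [PartialOrder P] {S : Type*} [DivisionRing S]

/-- `c` is a saturated chain in `P`: consecutive entries are covers. -/
def SatChain {P : Type*} [PartialOrder P] {k : ℕ} (c : Fin (k + 1) → P) : Prop :=
  ∀ i : Fin k, c i.castSucc ⋖ c i.succ

/-- `c` is a maximal chain of `P`: a saturated chain from a minimal element to a maximal
element of `P` (equivalently, the restriction to `P` of a maximal chain
`0̂ ⋖ y₁ ⋖ ⋯ ⋖ y_k ⋖ 1̂` of `P̂`). -/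
def MaxChain {P : Type*} [PartialOrder P] {k : ℕ} (c : Fin (k + 1) → P) : Prop :=
  SatChain c ∧ IsMin (c 0) ∧ IsMax (c (Fin.last k))

/-- `∑_{u ∈ P̂, u ⋖ v} f(u)`, with the convention `f(0̂) = 1`. -/
noncomputable def lSum (f : P → S) (v : P) : S :=
  (if IsMin v then 1 else 0) + ∑ u ∈ univ.filter (fun u => u ⋖ v), f u

/-- `∑_{u ∈ P̂, u ⋗ v} f(u)⁻¹`, with the convention `f(1̂) = C`; its inverse is the
parallel sum `⫲_{u ∈ P̂, u ⋗ v} f(u)` (where `x ⫲ y = (x⁻¹ + y⁻¹)⁻¹`). -/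
noncomputable def uInvSum (C : S) (f : P → S) (v : P) : S :=
  (if IsMax v then C⁻¹ else 0) + ∑ u ∈ univ.filter (fun u => v ⋖ u), (f u)⁻¹

/-- The noncommutative order toggle `T_v`: it replaces the label at `v` by
`(∑_{u ∈ P̂, u ⋖ v} f(u)) · f(v)⁻¹ · (⫲_{u ∈ P̂, u ⋗ v} f(u))` and fixes all other
labels. -/
noncomputable def ncT (C : S) (v : P) (f : P → S) : P → S :=
  fun x => if x = v then lSum f v * (f v)⁻¹ * (uInvSum C f v)⁻¹ else f x

/-- The noncommutative order elggot `E_v`: it replaces the label at `v` by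
`(⫲_{u ∈ P̂, u ⋗ v} f(u)) · f(v)⁻¹ · (∑_{u ∈ P̂, u ⋖ v} f(u))` and fixes all other
labels. -/
noncomputable def ncE (C : S) (v : P) (f : P → S) : P → S :=
  fun x => if x = v then (uInvSum C f v)⁻¹ * (f v)⁻¹ * lSum f v else f x

/-- Definedness of one application of `T_v` or `E_v` to `f`: every element inverted in
the computation (the label `f(v)`, the labels `f(u)` of the upper covers `u` of `v` in
`P̂`, and the sum of their inverses) is nonzero. -/
def ncODef (C : S) (v : P) (f : P → S) : Prop :=
  f v ≠ 0 ∧ (∀ u : P, v ⋖ u → f u ≠ 0) ∧ (IsMax v → C ≠ 0) ∧ uInvSum C f v ≠ 0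

/-- The element `∑ g(y_{c-1})⋯g(y₁) · g(y_k)⋯g(y_c)` inverted by the noncommutative
antichain toggle `τ_v`, summed over all maximal chains `0̂ ⋖ y₁ ⋖ ⋯ ⋖ y_k ⋖ 1̂` of `P̂`
with `y_c = v` (indices decrease by 1 within each factor). -/
noncomputable def tauDenom (g : P → S) (v : P) : S :=
  ∑ k ∈ range (Fintype.card P),
    ∑ c ∈ univ.filter (fun c : Fin (k + 1) → P => MaxChain c),
      ∑ j ∈ univ.filter (fun j : Fin (k + 1) => c j = v),
        (((List.ofFn (g ∘ c)).take j.1).reverse).prod *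
          (((List.ofFn (g ∘ c)).drop j.1).reverse).prod

/-- The element `∑ g(y_c)⋯g(y₁) · g(y_k)⋯g(y_{c+1})` inverted by the noncommutative
antichain elggot `ε_v`, summed over all maximal chains `0̂ ⋖ y₁ ⋖ ⋯ ⋖ y_k ⋖ 1̂` of `P̂`
with `y_c = v`. -/
noncomputable def epsDenom (g : P → S) (v : P) : S :=
  ∑ k ∈ range (Fintype.card P),
    ∑ c ∈ univ.filter (fun c : Fin (k + 1) → P => MaxChain c),
      ∑ j ∈ univ.filter (fun j : Fin (k + 1) => c j = v),
        (((List.ofFn (g ∘ c)).take (j.1 + 1)).reverse).prod *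
          (((List.ofFn (g ∘ c)).drop (j.1 + 1)).reverse).prod

/-- The noncommutative antichain toggle `τ_v`: it replaces the label at `v` by
`C · (∑ g(y_{c-1})⋯g(y₁) · g(y_k)⋯g(y_c))⁻¹` and fixes all other labels. -/
noncomputable def ncTau (C : S) (v : P) (g : P → S) : P → S :=
  fun x => if x = v then C * (tauDenom g v)⁻¹ else g x

/-- The noncommutative antichain elggot `ε_v`: it replaces the label at `v` by
`C · (∑ g(y_c)⋯g(y₁) · g(y_k)⋯g(y_{c+1}))⁻¹` and fixes all other labels. -/
noncomputable def ncEps (C : S) (v : P) (g : P → S) : P → S :=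
  fun x => if x = v then C * (epsDenom g v)⁻¹ else g x

/-- The noncommutative complement `Θ`: `(Θf)(x) = C · f(x)⁻¹`. -/
noncomputable def ncTheta (C : S) (f : P → S) : P → S := fun x => C * (f x)⁻¹

/-- The noncommutative down transfer `∇`:
`(∇f)(x) = f(x) · (∑_{y ∈ P̂, y ⋖ x} f(y))⁻¹` with `f(0̂) = 1`. -/
noncomputable def ncNabla (f : P → S) : P → S := fun x => f x * (lSum f x)⁻¹

/-- The noncommutative inverse up transfer `Δ⁻¹`:
`(Δ⁻¹f)(x) = ∑ f(y_k)⋯f(y₂)f(y₁)` over all saturated chains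
`x = y₁ ⋖ y₂ ⋖ ⋯ ⋖ y_k ⋖ 1̂` in `P̂`. -/
noncomputable def ncDeltaInv (f : P → S) : P → S := fun x =>
  ∑ k ∈ range (Fintype.card P),
    ∑ c ∈ univ.filter (fun c : Fin (k + 1) → P =>
        SatChain c ∧ c 0 = x ∧ IsMax (c (Fin.last k))),
      ((List.ofFn (f ∘ c)).reverse).prod

/-- The noncommutative inverse down transfer `∇⁻¹`:
`(∇⁻¹f)(x) = ∑ f(y_k)⋯f(y₂)f(y₁)` over all saturated chains
`0̂ ⋖ y₁ ⋖ y₂ ⋖ ⋯ ⋖ y_k = x` in `P̂`. -/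
noncomputable def ncNablaInv (f : P → S) : P → S := fun x =>
  ∑ k ∈ range (Fintype.card P),
    ∑ c ∈ univ.filter (fun c : Fin (k + 1) → P =>
        SatChain c ∧ IsMin (c 0) ∧ c (Fin.last k) = x),
      ((List.ofFn (f ∘ c)).reverse).prod

/-- `l` is a linear extension of `P`: it lists every element of `P` exactly once, and
`l[i] < l[j]` in `P` implies `i < j`. -/
def IsLinearExtension {P : Type*} [PartialOrder P] (l : List P) : Prop :=
  l.Nodup ∧ (∀ x : P, x ∈ l) ∧
    ∀ (i j : ℕ) (hi : i < l.length) (hj : j < l.length), l[i]'hi < l[j]'hj → i < j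

/-- `l` is a linear extension of the subposet `A` of `P`. -/
def IsLinearExtensionOn {P : Type*} [PartialOrder P] (A : Set P) (l : List P) : Prop :=
  l.Nodup ∧ (∀ x : P, x ∈ l ↔ x ∈ A) ∧
    ∀ (i j : ℕ) (hi : i < l.length) (hj : j < l.length), l[i]'hi < l[j]'hj → i < j

/-- Stepwise definedness of applying the noncommutative order toggles `T` along a list
(first element of the list applied first). -/
def ncOTogsDef (C : S) : List P → (P → S) → Prop
  | [], _ => True
  | v :: l, f => ncODef C v f ∧ ncOTogsDef C l (ncT C v f)

/-! ### Auxiliary lemmas -/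

theorem SatChain.strictMono {k : ℕ} {c : Fin (k + 1) → P} (h : SatChain c) :
    StrictMono c :=
  Fin.strictMono_iff_lt_succ.2 fun i => (h i).lt

theorem satChain_tail {k : ℕ} {c : Fin (k + 2) → P} (h : SatChain c) :
    SatChain (Fin.tail c) := by
  intro i
  have := h i.succ
  simpa [Fin.tail, ← Fin.succ_castSucc] using this

theorem satChain_cons {k : ℕ} {x : P} {c : Fin (k + 1) → P} (hx : x ⋖ c 0)
    (h : SatChain c) : SatChain (Fin.cons x c) := by
  intro i
  refine Fin.cases ?_ ?_ i
  · simpa using hx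
  · intro j
    have := h j
    simpa [← Fin.succ_castSucc] using this

/-- One layer of the chain sum in `ncDeltaInv`. -/
noncomputable def chainTerm (g : P → S) (k : ℕ) (y : P) : S :=
  ∑ c ∈ univ.filter (fun c : Fin (k + 1) → P =>
      SatChain c ∧ c 0 = y ∧ IsMax (c (Fin.last k))),
    ((List.ofFn (g ∘ c)).reverse).prod

theorem ncDeltaInv_eq_sum (g : P → S) (y : P) :
    ncDeltaInv g y = ∑ k ∈ range (Fintype.card P), chainTerm g k y := rfl

theorem chainTerm_zero (g : P → S) (x : P) :
    chainTerm g 0 x = if IsMax x then g x else 0 := by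
  unfold chainTerm
  by_cases hx : IsMax x
  · rw [if_pos hx]
    have hset : univ.filter (fun c : Fin 1 → P =>
        SatChain c ∧ c 0 = x ∧ IsMax (c (Fin.last 0))) = {fun _ => x} := by
      ext c
      simp only [mem_filter, mem_univ, true_and, mem_singleton]
      constructor
      · rintro ⟨-, h0, -⟩
        funext i
        rw [Fin.fin_one_eq_zero i]
        exact h0
      · rintro rfl
        exact ⟨fun i => i.elim0, rfl, hx⟩
    rw [hset, Finset.sum_singleton]
    simp
  · rw [if_neg hx]
    refine Finset.sum_eq_zero fun c hc => ?_
    simp only [mem_filter, mem_univ, true_and] at hc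
    exact absurd (hc.2.1 ▸ hc.2.2) hx

theorem chainTerm_card_zero (g : P → S) {m : ℕ} (hm : Fintype.card P = m + 1)
    {x u : P} (hxu : x < u) : chainTerm g m u = 0 := by
  unfold chainTerm
  refine Finset.sum_eq_zero fun c hc => ?_
  simp only [mem_filter, mem_univ, true_and] at hc
  obtain ⟨hsat, h0, -⟩ := hc
  have hbij : Function.Bijective c :=
    (Fintype.bijective_iff_injective_and_card c).2
      ⟨hsat.strictMono.injective, by simp [hm]⟩
  obtain ⟨j, hj⟩ := hbij.2 x
  have hle : u ≤ x := by
    rw [← h0, ← hj]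
    exact hsat.strictMono.monotone (Fin.zero_le j)
  exact absurd hle hxu.not_ge

theorem chainTerm_succ (g : P → S) (k : ℕ) (x : P) :
    chainTerm g (k + 1) x
      = (∑ u ∈ univ.filter (fun u => x ⋖ u), chainTerm g k u) * g x := by
  rw [Finset.sum_mul]
  unfold chainTerm
  simp_rw [Finset.sum_mul]
  rw [Finset.sum_sigma' (univ.filter (fun u => x ⋖ u))
    (fun u => univ.filter (fun c : Fin (k + 1) → P =>
        SatChain c ∧ c 0 = u ∧ IsMax (c (Fin.last k))))
    (fun u c => ((List.ofFn (g ∘ c)).reverse).prod * g x)]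
  refine Finset.sum_nbij' (fun c => ⟨c 1, Fin.tail c⟩) (fun p => Fin.cons x p.2)
    ?_ ?_ ?_ ?_ ?_
  · intro c hc
    simp only [mem_filter, mem_univ, true_and] at hc
    obtain ⟨hsat, h0, hmax⟩ := hc
    have hcov : x ⋖ c 1 := by
      have := hsat 0
      simpa [h0] using this
    refine Finset.mem_sigma.2 ⟨by simp [hcov], ?_⟩
    simp only [mem_filter, mem_univ, true_and]
    refine ⟨satChain_tail hsat, ?_, ?_⟩
    · show c (Fin.succ 0) = c 1
      rw [Fin.succ_zero_eq_one]
    · show IsMax (c (Fin.last k).succ)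
      rwa [Fin.succ_last]
  · intro p hp
    obtain ⟨hp1, hp2⟩ := Finset.mem_sigma.1 hp
    simp only [mem_filter, mem_univ, true_and] at hp1 hp2
    obtain ⟨hsat, h0, hmax⟩ := hp2
    simp only [mem_filter, mem_univ, true_and]
    refine ⟨satChain_cons (h0 ▸ hp1) hsat, by simp, ?_⟩
    rw [← Fin.succ_last, Fin.cons_succ]
    exact hmax
  · intro c hc
    simp only [mem_filter, mem_univ, true_and] at hc
    rw [← hc.2.1]
    exact Fin.cons_self_tail c
  · rintro ⟨u, c'⟩ hp
    obtain ⟨hp1, hp2⟩ := Finset.mem_sigma.1 hp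
    simp only [mem_filter, mem_univ, true_and] at hp2
    have h1 : (Fin.cons x c' : Fin (k + 2) → P) 1 = u := by
      rw [← Fin.succ_zero_eq_one, Fin.cons_succ, hp2.2.1]
    simp [Fin.tail_cons, h1]
  · intro c hc
    simp only [mem_filter, mem_univ, true_and] at hc
    rw [List.ofFn_succ, List.reverse_cons, List.prod_append, List.prod_cons,
      List.prod_nil, mul_one]
    have h1 : (g ∘ c) 0 = g x := by simp [hc.2.1]
    rw [h1]
    rfl

theorem ncDeltaInv_rec (g : P → S) (x : P) :
    ncDeltaInv g x
      = ((if IsMax x then (1 : S) else 0) +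
          ∑ u ∈ univ.filter (fun u => x ⋖ u), ncDeltaInv g u) * g x := by
  obtain ⟨m, hm⟩ : ∃ m, Fintype.card P = m + 1 :=
    ⟨Fintype.card P - 1,
      (Nat.succ_pred_eq_of_pos (Fintype.card_pos_iff.2 ⟨x⟩)).symm⟩
  have key : ∀ y : P, ncDeltaInv g y = ∑ k ∈ range (m + 1), chainTerm g k y := by
    intro y; rw [ncDeltaInv_eq_sum, hm]
  rw [key, Finset.sum_range_succ', chainTerm_zero]
  have hcongr : ∀ k ∈ range m, chainTerm g (k + 1) x
      = ∑ u ∈ univ.filter (fun u => x ⋖ u), chainTerm g k u * g x := by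
    intro k _
    rw [chainTerm_succ, Finset.sum_mul]
  rw [Finset.sum_congr rfl hcongr, Finset.sum_comm]
  have hu : ∀ u ∈ univ.filter (fun u => x ⋖ u),
      ∑ k ∈ range m, chainTerm g k u * g x = ncDeltaInv g u * g x := by
    intro u hu
    rw [← Finset.sum_mul, key u, Finset.sum_range_succ,
      chainTerm_card_zero g hm (mem_filter.1 hu).2.lt, add_zero]
  rw [Finset.sum_congr rfl hu, ← Finset.sum_mul, add_mul, add_comm]
  congr 1
  split <;> simp

theorem key_alg {C a b d U : S} (hC : ∀ s : S, C * s = s * C) (hb : b ≠ 0)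
    (hrec : d = U * (a * b⁻¹)) (hd : d ≠ 0) :
    b * a⁻¹ * (U * C⁻¹)⁻¹ = C * d⁻¹ := by
  have ha : a ≠ 0 := by
    rintro rfl
    exact hd (by rw [hrec, zero_mul, mul_zero])
  have hw : a * b⁻¹ ≠ 0 := mul_ne_zero ha (inv_ne_zero hb)
  have hU : U = d * (a * b⁻¹)⁻¹ := (eq_mul_inv_iff_mul_eq₀ hw).2 hrec.symm
  have hUinv : U⁻¹ = a * b⁻¹ * d⁻¹ := by
    rw [hU, mul_inv_rev, inv_inv]
  rw [mul_inv_rev, inv_inv, hUinv]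
  simp only [← mul_assoc]
  rw [mul_assoc (b * a⁻¹) C a, hC a, ← mul_assoc,
    mul_assoc b a⁻¹ a, inv_mul_cancel₀ ha, mul_one, ← hC b,
    mul_assoc (C * b), mul_assoc C b, ← mul_assoc b b⁻¹,
    mul_inv_cancel₀ hb, one_mul]

theorem toggle_value (C : S) (hC : ∀ s : S, C * s = s * C) (f : P → S)
    (hdefNabla : ∀ x : P, lSum f x ≠ 0)
    (hdefTheta : ∀ x : P, ncDeltaInv (ncNabla f) x ≠ 0) (v : P) :
    lSum f v * (f v)⁻¹ *
        (uInvSum C (ncTheta C (ncDeltaInv (ncNabla f))) v)⁻¹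
      = ncTheta C (ncDeltaInv (ncNabla f)) v := by
  have hrec : ncDeltaInv (ncNabla f) v
      = ((if IsMax v then (1 : S) else 0) +
          ∑ u ∈ univ.filter (fun u => v ⋖ u), ncDeltaInv (ncNabla f) u) *
        (f v * (lSum f v)⁻¹) := ncDeltaInv_rec (ncNabla f) v
  have huinv : uInvSum C (ncTheta C (ncDeltaInv (ncNabla f))) v
      = ((if IsMax v then (1 : S) else 0) +
          ∑ u ∈ univ.filter (fun u => v ⋖ u), ncDeltaInv (ncNabla f) u) * C⁻¹ := by
    unfold uInvSum ncTheta
    rw [add_mul, Finset.sum_mul]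
    congr 1
    · split <;> simp
    · refine Finset.sum_congr rfl fun u _ => ?_
      rw [mul_inv_rev, inv_inv]
  rw [huinv]
  exact key_alg hC (hdefNabla v) hrec (hdefTheta v)

theorem toggles_eq (C : S) (hC : ∀ s : S, C * s = s * C) (f : P → S)
    (hdefNabla : ∀ x : P, lSum f x ≠ 0)
    (hdefTheta : ∀ x : P, ncDeltaInv (ncNabla f) x ≠ 0) :
    ∀ t : List P, t.Nodup →
      (∀ v ∈ t, ∀ u : P, v < u → u ∈ t) →
      (∀ (i j : ℕ) (hi : i < t.length) (hj : j < t.length),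
        t[i]'hi < t[j]'hj → i < j) →
      t.foldr (fun v h => ncT C v h) f
        = fun x => if x ∈ t then ncTheta C (ncDeltaInv (ncNabla f)) x else f x := by
  intro t
  induction t with
  | nil => intro _ _ _; funext x; simp
  | cons v t' ih =>
    intro hnd hup hord
    have hvt' : v ∉ t' := (List.nodup_cons.1 hnd).1
    have hlow : ∀ u : P, u < v → u ∉ t' := by
      intro u hu hmem
      obtain ⟨j, hj, hje⟩ := List.mem_iff_getElem.1 hmem
      have hj' : j + 1 < (v :: t').length := by simpa using Nat.succ_lt_succ hj
      have := hord (j + 1) 0 hj' (by simp) (by simpa [hje] using hu)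
      omega
    have hup' : ∀ a ∈ t', ∀ u : P, a < u → u ∈ t' := by
      intro a ha u hau
      rcases List.mem_cons.1 (hup a (List.mem_cons_of_mem _ ha) u hau) with rfl | h
      · exact absurd ha (hlow a hau)
      · exact h
    have hord' : ∀ (i j : ℕ) (hi : i < t'.length) (hj : j < t'.length),
        t'[i]'hi < t'[j]'hj → i < j := by
      intro i j hi hj hlt
      have hi' : i + 1 < (v :: t').length := by simpa using Nat.succ_lt_succ hi
      have hj' : j + 1 < (v :: t').length := by simpa using Nat.succ_lt_succ hj
      have := hord (i + 1) (j + 1) hi' hj' (by simpa using hlt)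
      omega
    have hind := ih (List.nodup_cons.1 hnd).2 hup' hord'
    rw [List.foldr_cons, hind]
    funext x
    by_cases hx : x = v
    · subst hx
      rw [if_pos (List.mem_cons_self (a := x) (l := t'))]
      show ncT C x _ x = _
      rw [ncT, if_pos rfl]
      have hhx : (if x ∈ t' then ncTheta C (ncDeltaInv (ncNabla f)) x else f x)
          = f x := if_neg hvt'
      have hls : lSum (fun y => if y ∈ t' then ncTheta C (ncDeltaInv (ncNabla f)) y
          else f y) x = lSum f x := by
        unfold lSum
        congr 1
        refine Finset.sum_congr rfl fun u hu => ?_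
        simp only [if_neg (hlow u (mem_filter.1 hu).2.lt)]
      have hus : uInvSum C (fun y => if y ∈ t' then
          ncTheta C (ncDeltaInv (ncNabla f)) y else f y) x
          = uInvSum C (ncTheta C (ncDeltaInv (ncNabla f))) x := by
        unfold uInvSum
        congr 1
        refine Finset.sum_congr rfl fun u hu => ?_
        have hcov : x ⋖ u := (mem_filter.1 hu).2
        have hmem : u ∈ t' := by
          rcases List.mem_cons.1
            (hup x (List.mem_cons_self (a := x) (l := t')) u hcov.lt) with rfl | h
          · exact absurd rfl hcov.lt.ne'
          · exact h
        simp only [if_pos hmem]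
      rw [hhx, hls, hus]
      exact toggle_value C hC f hdefNabla hdefTheta x
    · rw [ncT, if_neg hx]
      simp only [List.mem_cons]
      by_cases hxt : x ∈ t' <;> simp [hx, hxt]

/-- For any linear extension `(x₁,…,xₙ)` of `P`, noncommutative order
rowmotion `NOR = T_{x₁} ∘ T_{x₂} ∘ ⋯ ∘ T_{xₙ}` (rightmost toggle applied first) equals
the composition `Θ ∘ Δ⁻¹ ∘ ∇` of the noncommutative transfer maps, on every `S`-labeling
for which both sides are defined. -/
theorem NOR_eq_theta_deltaInv_nabla (C : S) (hC : ∀ s : S, C * s = s * C)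
    (l : List P) (hl : IsLinearExtension l) (f : P → S)
    (hdefL : ncOTogsDef C l.reverse f)
    (hdefNabla : ∀ x : P, lSum f x ≠ 0)
    (hdefTheta : ∀ x : P, ncDeltaInv (ncNabla f) x ≠ 0) :
    l.foldr (fun v h => ncT C v h) f = ncTheta C (ncDeltaInv (ncNabla f)) := by
  obtain ⟨hnd, hmem, hord⟩ := hl
  rw [toggles_eq C hC f hdefNabla hdefTheta l hnd (fun v _ u _ => hmem u) hord]
  funext x
  rw [if_pos (hmem x)]
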